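/- Let δ ∈ (0,1] and L_A > 0, and assume f is L_A-smooth with respect to the atomic norm on lin(A). Let x⋆ ∈ lin(A) be a minimizer of f over lin(A) and let R_A ≥ 0 satisfy ‖x − x⋆‖_A ≤ R_A for every x ∈ lin(A) with f(x) ≤ f(x₀). Starting from x₀ ∈ lin(A), define iterates by choosing z_t ∈ A with ⟨∇f(x_t), z_t⟩ ≤ δ · min_{z∈A} ⟨∇f(x_t), z⟩ (approximate LMO) and setting x_{t+1} = x_t − (⟨∇f(x_t), z_t⟩/L_A)·z_t. Then for every t ≥ 0: f(x_{t+1}) − f(x⋆) ≤ 2·L_A·R_A² / (δ²·(t + 2)). -/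

import Mathlib

open Submodule Set Pointwise RealInnerProductSpace

lemma grad_convex_ineq {H : Type*} [NormedAddCommGroup H] [InnerProductSpace ℝ H]
    [CompleteSpace H] {f : H → ℝ} {f' : H → H} (hgrad : ∀ x, HasGradientAt f (f' x) x)
    (hconv : ConvexOn ℝ univ f) (x y : H) : f x + ⟪f' x, y - x⟫ ≤ f y := by
  set d : ℝ := ⟪f' x, y - x⟫ with hd
  set c : ℝ → H := fun t => x + t • (y - x) with hc
  have hcd : HasDerivAt c (y - x) 0 := by
    have h := (((hasDerivAt_id (0 : ℝ)).smul_const (y - x)).const_add x)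
    rw [one_smul] at h
    exact h
  have hfd : HasDerivAt (fun t => f (c t)) d 0 := by
    have h0 : c 0 = x := by simp [hc]
    have := HasFDerivAt.comp_hasDerivAt 0 (h0 ▸ (hgrad x).hasFDerivAt) hcd
    simp [hd, h0, Function.comp, InnerProductSpace.toDual_apply_apply] at this
    exact this
  have hslope : ∀ t ∈ Ioc (0:ℝ) 1, slope (fun t => f (c t)) 0 t ≤ f y - f x := by
    intro t ht
    have h1 : c t = (1 - t) • x + t • y := by
      simp only [hc]; module
    have h2 : f (c t) ≤ (1 - t) * f x + t * f y := by
      rw [h1]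
      exact hconv.2 (mem_univ x) (mem_univ y) (by linarith [ht.2]) ht.1.le (by ring)
    rw [slope_def_field]
    have h3 : f (c 0) = f x := by simp [hc]
    rw [sub_zero, div_le_iff₀ ht.1, h3]
    nlinarith [ht.1]
  have htend : Filter.Tendsto (slope (fun t => f (c t)) 0) (nhdsWithin 0 (Ioi 0)) (nhds d) :=
    ((hasDerivAt_iff_tendsto_slope.1 hfd).mono_left
      (nhdsWithin_mono _ (fun a ha => (Set.mem_compl_singleton_iff).2 (ne_of_gt ha))))
  have : d ≤ f y - f x := by
    refine le_of_tendsto htend ?_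
    filter_upwards [Ioo_mem_nhdsGT_of_mem (by norm_num : (0:ℝ) ∈ Ico 0 1)] with t ht
    exact hslope t ⟨ht.1, ht.2.le⟩
  linarith

lemma rec_base {C h q : ℝ} (hC : 0 < C) (hh : 0 ≤ h) (hq : q * C = h ^ 2) :
    h - q ≤ C / 2 := by
  nlinarith [sq_nonneg (h - C / 2)]

lemma rec_step {C h q n : ℝ} (hC : 0 < C) (hh : 0 ≤ h) (hn : 0 ≤ n) (hq : q * C = h ^ 2)
    (hhs : h * (n + 2) ≤ C) : (h - q) * (n + 3) ≤ C := by
  nlinarith [sq_nonneg (C - h * (n + 2)), sq_nonneg h,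
    mul_nonneg (mul_nonneg hh (by linarith : (0:ℝ) ≤ C - h * (n + 2))) (by linarith : (0:ℝ) ≤ n + 1)]

theorem stmt_1 {H : Type*} [NormedAddCommGroup H] [InnerProductSpace ℝ H] [CompleteSpace H]
    (A : Set H) (hA : IsCompact A) (hsym : ∀ z ∈ A, -z ∈ A)
    (f : H → ℝ) (f' : H → H) (hgrad : ∀ x, HasGradientAt f (f' x) x)
    (hconv : ConvexOn ℝ univ f)
    (habs : ∀ x ∈ span ℝ A, ∃ c : ℝ, 0 < c ∧ x ∈ c • convexHull ℝ A)
    (hpos : ∀ x ∈ span ℝ A, x ≠ 0 → 0 < gauge (convexHull ℝ A) x)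
    (δ LA : ℝ) (hδ0 : 0 < δ) (hδ1 : δ ≤ 1) (hLA : 0 < LA)
    (hsmooth : ∀ x ∈ span ℝ A, ∀ z ∈ span ℝ A, gauge (convexHull ℝ A) z = 1 →
      ∀ γ : ℝ, 0 < γ → f (x + γ • z) ≤ f x + γ * ⟪f' x, z⟫ + LA / 2 * γ ^ 2)
    (xs : H) (hxs : xs ∈ span ℝ A) (hmin : ∀ y ∈ span ℝ A, f xs ≤ f y)
    (R : ℝ) (hR0 : 0 ≤ R)
    (x z : ℕ → H)
    (hx0 : x 0 ∈ span ℝ A)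
    (hlevel : ∀ y ∈ span ℝ A, f y ≤ f (x 0) → gauge (convexHull ℝ A) (y - xs) ≤ R)
    (hzA : ∀ t, z t ∈ A)
    (hlmo : ∀ t, ⟪f' (x t), z t⟫ ≤ δ * sInf ((fun w => ⟪f' (x t), w⟫) '' A))
    (hupd : ∀ t, x (t + 1) = x t - (⟪f' (x t), z t⟫ / LA) • z t) :
    ∀ t : ℕ, f (x (t + 1)) - f xs ≤ 2 * LA * R ^ 2 / (δ ^ 2 * ((t : ℝ) + 2)) := by
  have hzspan : ∀ t, z t ∈ span ℝ A := fun t => subset_span (hzA t)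
  have hxspan : ∀ t, x t ∈ span ℝ A := by
    intro t; induction t with
    | zero => exact hx0
    | succ n ih => rw [hupd n]; exact sub_mem ih (smul_mem _ _ (hzspan n))
  set K := convexHull ℝ A with hK
  set g : ℕ → ℝ := fun t => ⟪f' (x t), z t⟫ with hg
  set m : ℕ → ℝ := fun t => sInf ((fun w => ⟪f' (x t), w⟫) '' A) with hm
  have hg_le : ∀ t, g t ≤ δ * m t := hlmo
  have hupd' : ∀ t, x (t + 1) = x t - (g t / LA) • z t := hupd
  have hbdd : ∀ t, BddBelow ((fun w => ⟪f' (x t), w⟫) '' A) := fun t =>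
    (hA.image (continuous_const.inner continuous_id)).bddBelow
  have hm_le : ∀ t, ∀ w ∈ A, m t ≤ ⟪f' (x t), w⟫ := fun t w hw =>
    csInf_le (hbdd t) ⟨w, hw, rfl⟩
  have hm0 : ∀ t, m t ≤ 0 := by
    intro t
    have h1 := hm_le t (z 0) (hzA 0)
    have h2 := hm_le t (-(z 0)) (hsym _ (hzA 0))
    rw [inner_neg_right] at h2
    linarith
  have hgneg : ∀ t, g t ≤ 0 := by
    intro t
    have := hg_le t
    nlinarith [hm0 t, hδ0]
  -- descent lemma
  have descent : ∀ t, f (x (t + 1)) ≤ f (x t) - g t ^ 2 / (2 * LA) := by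
    intro t
    rcases eq_or_lt_of_le (hgneg t) with h0 | hlt
    · have hx1 : x (t + 1) = x t := by rw [hupd' t, h0]; simp
      rw [hx1, h0]; simp
    · have hz0 : z t ≠ 0 := by
        intro h
        rw [hg] at hlt
        simp only [h, inner_zero_right] at hlt
        exact lt_irrefl 0 hlt
      have ha : 0 < gauge K (z t) := hpos _ (hzspan t) hz0
      have ha1 : gauge K (z t) ≤ 1 := gauge_le_one_of_mem (subset_convexHull ℝ A (hzA t))
      set a := gauge K (z t) with haa
      have hu_gauge : gauge K (a⁻¹ • z t) = 1 := by
        rw [gauge_smul_of_nonneg (inv_nonneg.2 ha.le), smul_eq_mul, inv_mul_cancel₀ ha.ne']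
      have husp : a⁻¹ • z t ∈ span ℝ A := smul_mem _ _ (hzspan t)
      have hγ : 0 < (-g t / LA) * a := by
        apply mul_pos _ ha
        apply div_pos _ hLA
        linarith
      have hs := hsmooth (x t) (hxspan t) _ husp hu_gauge _ hγ
      have hxe : x t + ((-g t / LA) * a) • a⁻¹ • z t = x (t + 1) := by
        rw [hupd' t, smul_smul]
        have h1 : -g t / LA * a * a⁻¹ = -(g t / LA) := by
          field_simp
        rw [h1]
        module
      rw [hxe] at hs
      have hiu : ⟪f' (x t), a⁻¹ • z t⟫ = a⁻¹ * g t := real_inner_smul_right _ _ _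
      rw [hiu] at hs
      have h1 : -g t / LA * a * (a⁻¹ * g t) = -(g t ^ 2 / LA) := by
        field_simp
      have h2 : LA / 2 * (-g t / LA * a) ^ 2 = g t ^ 2 * a ^ 2 / (2 * LA) := by
        field_simp
      rw [h1, h2] at hs
      have ha2 : a ^ 2 ≤ 1 := by nlinarith [ha.le, ha1]
      have h4 : g t ^ 2 * a ^ 2 ≤ g t ^ 2 := by nlinarith [sq_nonneg (g t), ha2]
      have h3 : g t ^ 2 * a ^ 2 / (2 * LA) ≤ g t ^ 2 / (2 * LA) :=
        div_le_div_of_nonneg_right h4 (by linarith) |>.trans_eq rfl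
      have h5 : g t ^ 2 / LA = 2 * (g t ^ 2 / (2 * LA)) := by
        field_simp
      linarith
  have hgap : ∀ t, 0 ≤ f (x t) - f xs := fun t => sub_nonneg.2 (hmin _ (hxspan t))
  have hfdec : ∀ t, f (x t) ≤ f (x 0) := by
    intro t; induction t with
    | zero => exact le_refl _
    | succ n ih =>
      have h1 := descent n
      have h2 : 0 ≤ g n ^ 2 / (2 * LA) := div_nonneg (sq_nonneg _) (by linarith)
      linarith
  have hKbound : ∀ t, ∀ u ∈ K, ⟪f' (x t), u⟫ ≤ -(m t) := by
    intro t
    have hAb : ∀ w ∈ A, w ∈ {v : H | ⟪f' (x t), v⟫ ≤ -(m t)} := by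
      intro w hw
      have h2 := hm_le t (-w) (hsym w hw)
      rw [inner_neg_right] at h2
      simpa using by linarith
    have hhalf : Convex ℝ {v : H | ⟪f' (x t), v⟫ ≤ -(m t)} :=
      convex_halfSpace_le ⟨fun a b => inner_add_right _ a b,
        fun r v => real_inner_smul_right _ _ r⟩ _
    exact fun u hu => convexHull_min hAb hhalf hu
  have hdual : ∀ t, f (x t) - f xs ≤ R * (-(m t)) := by
    intro t
    have hmge : 0 ≤ -(m t) := by linarith [hm0 t]
    have hgi : f (x t) - f xs ≤ ⟪f' (x t), x t - xs⟫ := by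
      have h1 := grad_convex_ineq hgrad hconv (x t) xs
      have h2 : ⟪f' (x t), xs - x t⟫ = -⟪f' (x t), x t - xs⟫ := by
        rw [← inner_neg_right]
        congr 1
        abel
      rw [h2] at h1
      linarith
    have hd_span : x t - xs ∈ span ℝ A := sub_mem (hxspan t) hxs
    have hdR : gauge K (x t - xs) ≤ R := hlevel _ (hxspan t) (hfdec t)
    have hcore : ⟪f' (x t), x t - xs⟫ ≤ gauge K (x t - xs) * (-(m t)) := by
      rcases eq_or_ne (x t - xs) 0 with h0 | h0
      · simp [h0]
      · refine le_of_forall_pos_le_add ?_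
        intro ε hε
        rcases (hmge.eq_or_lt.imp Eq.symm id) with hm' | hm'
        · -- -(m t) = 0
          obtain ⟨cc, hcc, hmem⟩ := habs _ hd_span
          obtain ⟨u, hu, huu⟩ := Set.mem_smul_set.1 hmem
          have h3 : ⟪f' (x t), x t - xs⟫ = cc * ⟪f' (x t), u⟫ := by
            rw [← huu, real_inner_smul_right]
          have h4 := hKbound t u hu
          rw [hm'] at h4 ⊢
          have h6 : cc * ⟪f' (x t), u⟫ ≤ 0 := mul_nonpos_of_nonneg_of_nonpos hcc.le h4
          rw [h3, mul_zero, zero_add]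
          linarith
        · have hag : 0 < gauge K (x t - xs) := hpos _ hd_span h0
          have hlt : gauge K (x t - xs) < gauge K (x t - xs) + ε / (-(m t)) := by
            have : 0 < ε / (-(m t)) := div_pos hε hm'
            linarith
          obtain ⟨cc, hcc⟩ := habs _ hd_span
          have hne : {r : ℝ | r ∈ Set.Ioi (0:ℝ) ∧ (x t - xs) ∈ r • K}.Nonempty :=
            ⟨cc, hcc.1, hcc.2⟩
          have hsinf : sInf {r : ℝ | r ∈ Set.Ioi (0:ℝ) ∧ (x t - xs) ∈ r • K}
              < gauge K (x t - xs) + ε / (-(m t)) := by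
            rw [← gauge_def]
            exact hlt
          obtain ⟨r, hr, hrlt⟩ := exists_lt_of_csInf_lt hne hsinf
          obtain ⟨u, hu, huu⟩ := Set.mem_smul_set.1 hr.2
          have h3 : ⟪f' (x t), x t - xs⟫ = r * ⟪f' (x t), u⟫ := by
            rw [← huu, real_inner_smul_right]
          have h4 := hKbound t u hu
          have hr0 : (0:ℝ) < r := hr.1
          have h5 : ⟪f' (x t), x t - xs⟫ ≤ r * (-(m t)) := by
            rw [h3]
            exact mul_le_mul_of_nonneg_left h4 hr0.le
          have h6 : r * (-(m t)) ≤ (gauge K (x t - xs) + ε / (-(m t))) * (-(m t)) :=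
            mul_le_mul_of_nonneg_right hrlt.le hmge
          have h7 : (gauge K (x t - xs) + ε / (-(m t))) * (-(m t))
              = gauge K (x t - xs) * (-(m t)) + ε := by
            rw [add_mul, div_mul_cancel₀ _ hm'.ne']
          linarith
    calc f (x t) - f xs ≤ ⟪f' (x t), x t - xs⟫ := hgi
      _ ≤ gauge K (x t - xs) * (-(m t)) := hcore
      _ ≤ R * (-(m t)) := mul_le_mul_of_nonneg_right hdR hmge
  have hkey : ∀ t, δ * (f (x t) - f xs) ≤ R * (-(g t)) := by
    intro t
    have h1 := hdual t
    have h2 : δ * (-(m t)) ≤ -(g t) := by linarith [hg_le t]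
    have h3 : δ * (f (x t) - f xs) ≤ δ * (R * (-(m t))) :=
      mul_le_mul_of_nonneg_left h1 hδ0.le
    have h4 : R * (δ * (-(m t))) ≤ R * (-(g t)) := mul_le_mul_of_nonneg_left h2 hR0
    nlinarith [h3, h4]
  intro t
  rcases eq_or_lt_of_le hR0 with hR | hR
  · -- R = 0
    have h0 : f (x (t + 1)) - f xs ≤ 0 := by
      have h1 := hkey (t + 1)
      rw [← hR] at h1
      nlinarith [hδ0]
    have h2 : 2 * LA * R ^ 2 / (δ ^ 2 * ((t : ℝ) + 2)) = 0 := by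
      rw [← hR]; simp
    rw [h2]
    exact h0
  · set C := 2 * LA * R ^ 2 / δ ^ 2 with hC
    have hCpos : 0 < C := by positivity
    have hstep : ∀ s : ℕ, f (x (s + 1)) - f xs
        ≤ (f (x s) - f xs) - (f (x s) - f xs) ^ 2 / C := by
      intro s
      have h1 := descent s
      have h2 := hkey s
      have h3 := hgap s
      have h4 : δ ^ 2 * (f (x s) - f xs) ^ 2 ≤ R ^ 2 * g s ^ 2 := by
        have := mul_self_le_mul_self (by positivity : 0 ≤ δ * (f (x s) - f xs)) h2
        nlinarith [this]
      have h5 : (f (x s) - f xs) ^ 2 / C = δ ^ 2 * (f (x s) - f xs) ^ 2 / (2 * LA * R ^ 2) := by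
        rw [hC]
        rw [div_div_eq_mul_div, div_eq_div_iff (by positivity) (by positivity)]
        ring
      have h6 : δ ^ 2 * (f (x s) - f xs) ^ 2 / (2 * LA * R ^ 2)
          ≤ R ^ 2 * g s ^ 2 / (2 * LA * R ^ 2) :=
        div_le_div_of_nonneg_right h4 (by positivity) |>.trans_eq rfl
      have h7 : R ^ 2 * g s ^ 2 / (2 * LA * R ^ 2) = g s ^ 2 / (2 * LA) := by
        rw [div_eq_div_iff (by positivity) (by positivity)]
        ring
      rw [h5]
      rw [h7] at h6
      linarith
    have hind : ∀ s : ℕ, f (x (s + 1)) - f xs ≤ C / ((s : ℝ) + 2) := by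
      intro s
      induction s with
      | zero =>
        have h1 := hstep 0
        have h2 := hgap 0
        have hq : (f (x 0) - f xs) ^ 2 / C * C = (f (x 0) - f xs) ^ 2 :=
          div_mul_cancel₀ _ hCpos.ne'
        have h3 : (f (x 0) - f xs) - (f (x 0) - f xs) ^ 2 / C ≤ C / 2 :=
          rec_base hCpos h2 hq
        norm_num
        linarith
      | succ n ih =>
        have h1 := hstep (n + 1)
        have h2 := hgap (n + 1)
        have hq : (f (x (n + 1)) - f xs) ^ 2 / C * C = (f (x (n + 1)) - f xs) ^ 2 :=
          div_mul_cancel₀ _ hCpos.ne'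
        have hn2 : (0:ℝ) < (n : ℝ) + 2 := by positivity
        have hhs : (f (x (n + 1)) - f xs) * ((n : ℝ) + 2) ≤ C := by
          rw [le_div_iff₀ hn2] at ih
          exact ih
        have hu0 : 0 ≤ C - (f (x (n + 1)) - f xs) * ((n : ℝ) + 2) := by linarith
        have hgoal : ((f (x (n + 1)) - f xs) - (f (x (n + 1)) - f xs) ^ 2 / C)
            * ((n : ℝ) + 3) ≤ C :=
          rec_step hCpos h2 (Nat.cast_nonneg n) hq hhs
        have h4 : f (x (n + 1 + 1)) - f xs ≤ C / ((n : ℝ) + 3) := by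
          rw [le_div_iff₀ (by positivity : (0:ℝ) < (n : ℝ) + 3)]
          calc (f (x (n + 1 + 1)) - f xs) * ((n : ℝ) + 3)
              ≤ ((f (x (n + 1)) - f xs) - (f (x (n + 1)) - f xs) ^ 2 / C) * ((n : ℝ) + 3) := by
                apply mul_le_mul_of_nonneg_right h1 (by positivity)
            _ ≤ C := hgoal
        have h5 : ((n + 1 : ℕ) : ℝ) + 2 = (n : ℝ) + 3 := by push_cast; ring
        rw [h5]
        exact h4
    have hfin := hind t
    have heq : C / ((t : ℝ) + 2) = 2 * LA * R ^ 2 / (δ ^ 2 * ((t : ℝ) + 2)) := by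
      rw [hC, div_div]
    rw [heq] at hfin
    exact hfin
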